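/- arXiv:0706.2718 — 2 statements merged into one kernel-verified Lean document; each statement's English description precedes it below -/
import Mathlib

section
/- Let n ≥ 1, n ≠ 2. Then the smallest D-invariant k-subspace of W = k[D] ⊗ Aₙ[v] closed under all products ∘ₙ and containing {ψ₂(g_I) : I ⊆ {1,…,n}} is equal to C₂. (That is, (C₂, ψ₂) is an associative envelope of the conformal superalgebra Kₙ for n ≠ 2.) -/
/-! ### Conformal algebras: basic definitions -/

/-- A conformal algebra over a field `k`: a `k`-vector space with a linear map `D`
and a family of bilinear `n`-th products satisfying (C1) locality, (C2) and (C3). -/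
structure ConfAlg (k : Type) [Field k] (C : Type) [AddCommGroup C] [Module k C] where
  Dmap : C →ₗ[k] C
  prod : ℕ → C →ₗ[k] C →ₗ[k] C
  locality : ∀ a b : C, ∃ N : ℕ, ∀ m, N ≤ m → prod m a b = 0
  axC2 : ∀ (m : ℕ) (a b : C), prod m (Dmap a) b = -((m : k)) • prod (m - 1) a b
  axC3 : ∀ (m : ℕ) (a b : C),
    prod m a (Dmap b) = Dmap (prod m a b) + (m : k) • prod (m - 1) a b

section BasicDefs

variable {k : Type} [Field k] {C : Type} [AddCommGroup C] [Module k C]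

/-- Left associativity identity for a conformal algebra. -/
def ConfAlg.IsAssoc (A : ConfAlg k C) : Prop :=
  ∀ (nn m : ℕ) (a b c : C),
    A.prod m (A.prod nn a b) c =
      ∑ s ∈ Finset.range (nn + 1),
        ((-1 : k) ^ s * (nn.choose s : k)) • A.prod (nn - s) a (A.prod (m + s) b c)

/-- A ℤ₂-grading of a conformal algebra: `grade false` is the even part,
`grade true` the odd part. -/
structure ConfGrading (A : ConfAlg k C) where
  grade : Bool → Submodule k C
  inf_bot : grade false ⊓ grade true = ⊥
  sup_top : grade false ⊔ grade true = ⊤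
  D_mem : ∀ (i : Bool), ∀ x ∈ grade i, A.Dmap x ∈ grade i
  prod_mem : ∀ (i j : Bool) (m : ℕ) (x y : C), x ∈ grade i → y ∈ grade j →
    A.prod m x y ∈ grade (xor i j)

/-- The "conjugate" product `{b ∘ₘ a} = ∑_{s ≥ 0} ((-1)^{m+s}/s!) • Dˢ (b ∘_{m+s} a)`,
a finite sum by locality, expressed via `finsum`. -/
noncomputable def cbrR (D : C →ₗ[k] C) (P : ℕ → C →ₗ[k] C →ₗ[k] C)
    (m : ℕ) (b a : C) : C :=
  ∑ᶠ s : ℕ, ((-1 : k) ^ (m + s) * ((Nat.factorial s : k))⁻¹) • (D ^ s) (P (m + s) b a)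

/-- The super-commutator `[a ∘ₘ b] = a ∘ₘ b - (-1)^{p(a)p(b)} {b ∘ₘ a}` for homogeneous
`a, b` of parities `pa, pb` (`false` = even, `true` = odd). -/
noncomputable def sbrR (D : C →ₗ[k] C) (P : ℕ → C →ₗ[k] C →ₗ[k] C)
    (pa pb : Bool) (m : ℕ) (a b : C) : C :=
  P m a b - (if pa && pb then (-1 : k) else 1) • cbrR D P m b a

/-- The defining relations of the Lie conformal superalgebra `Wₙ`, for homogeneous
elements `V` (even), `X i`, `Pd i` (odd) of an associative conformal algebra with
derivation `D` and products `P`. -/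
noncomputable def WRelsR (D : C →ₗ[k] C) (P : ℕ → C →ₗ[k] C →ₗ[k] C) {n : ℕ}
    (V : C) (X Pd : Fin n → C) : Prop :=
  (∀ i j, sbrR D P true true 0 (X i) (X j) = - sbrR D P true true 0 (X j) (X i)) ∧
  (∀ (m : ℕ) (i j), sbrR D P true true m (Pd i) (Pd j) = 0) ∧
  (∀ i j, sbrR D P true true 0 (Pd j) (X i) = if i = j then V else 0) ∧
  (∀ i, sbrR D P false true 0 V (X i) = D (X i)) ∧
  (∀ i, sbrR D P true false 0 (X i) V = D (X i)) ∧
  (∀ i, sbrR D P true false 1 (X i) V = (2 : k) • X i) ∧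
  (∀ j, sbrR D P true false 0 (Pd j) V = 0) ∧
  (∀ j, sbrR D P true false 1 (Pd j) V = Pd j) ∧
  (∀ i j, sbrR D P true true 0 (X i) (X j)
      = ((2 : k))⁻¹ • D (sbrR D P true true 1 (X i) (X j))) ∧
  (sbrR D P false false 0 V V = D V) ∧
  (sbrR D P false false 1 V V = (2 : k) • V) ∧
  (∀ m, 2 ≤ m →
    (∀ i j, sbrR D P true true m (X i) (X j) = 0) ∧
    (∀ j, sbrR D P false true m V (Pd j) = 0) ∧
    (∀ i j, sbrR D P true true m (X i) (Pd j) = 0) ∧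
    (∀ i, sbrR D P false true m V (X i) = 0) ∧
    sbrR D P false false m V V = 0)

end BasicDefs
set_option maxSynthPendingDepth 5

/-! ### The algebra `Aₙ` and the conformal algebra `W = k[D] ⊗ Aₙ[v]` -/

/-- Generators of the algebra `Aₙ`: `xi i` stands for `ξᵢ`, `pa i` for `∂ᵢ`. -/
inductive WGen (n : ℕ) : Type
  | xi : Fin n → WGen n
  | pa : Fin n → WGen n

/-- The defining relations of `Aₙ`:
`ξᵢξⱼ + ξⱼξᵢ = 0`, `∂ᵢ∂ⱼ + ∂ⱼ∂ᵢ = 0`, `∂ᵢξⱼ + ξⱼ∂ᵢ = δᵢⱼ·1`. -/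
inductive ARel (k : Type) [Field k] (n : ℕ) :
    FreeAlgebra k (WGen n) → FreeAlgebra k (WGen n) → Prop
  | xixi (i j : Fin n) : ARel k n
      (FreeAlgebra.ι k (WGen.xi i) * FreeAlgebra.ι k (WGen.xi j)
        + FreeAlgebra.ι k (WGen.xi j) * FreeAlgebra.ι k (WGen.xi i)) 0
  | papa (i j : Fin n) : ARel k n
      (FreeAlgebra.ι k (WGen.pa i) * FreeAlgebra.ι k (WGen.pa j)
        + FreeAlgebra.ι k (WGen.pa j) * FreeAlgebra.ι k (WGen.pa i)) 0
  | paxi (i j : Fin n) : ARel k n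
      (FreeAlgebra.ι k (WGen.pa i) * FreeAlgebra.ι k (WGen.xi j)
        + FreeAlgebra.ι k (WGen.xi j) * FreeAlgebra.ι k (WGen.pa i))
      (if i = j then 1 else 0)

/-- The algebra `Aₙ`. -/
abbrev An (k : Type) [Field k] (n : ℕ) := RingQuot (ARel k n)

/-- `Aₙ[v]`: polynomials over `Aₙ` in the variable `v` (= `Polynomial.X`). -/
abbrev Av (k : Type) [Field k] (n : ℕ) := Polynomial (An k n)

/-- `W = k[D] ⊗ Aₙ[v]`, realized as polynomials in the (outer) variable `D`
with coefficients in `Aₙ[v]`; the element `Dᵗ ⊗ w` is `(monomial t) w`. -/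
abbrev Wc (k : Type) [Field k] (n : ℕ) := Polynomial (Av k n)

/-- The generator `ξᵢ ∈ Aₙ`. -/
noncomputable def xg (k : Type) [Field k] (n : ℕ) (i : Fin n) : An k n :=
  RingQuot.mkAlgHom k (ARel k n) (FreeAlgebra.ι k (WGen.xi i))

/-- The generator `∂ᵢ ∈ Aₙ`. -/
noncomputable def dg (k : Type) [Field k] (n : ℕ) (i : Fin n) : An k n :=
  RingQuot.mkAlgHom k (ARel k n) (FreeAlgebra.ι k (WGen.pa i))

/-- The element `v = 1 ⊗ v ∈ W`. -/
noncomputable def vW (k : Type) [Field k] (n : ℕ) : Wc k n :=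
  Polynomial.C Polynomial.X

/-- The element `ξᵢ = 1 ⊗ ξᵢ ∈ W`. -/
noncomputable def xiW (k : Type) [Field k] (n : ℕ) (i : Fin n) : Wc k n :=
  Polynomial.C (Polynomial.C (xg k n i))

/-- The element `∂ᵢ = 1 ⊗ ∂ᵢ ∈ W`. -/
noncomputable def paW (k : Type) [Field k] (n : ℕ) (i : Fin n) : Wc k n :=
  Polynomial.C (Polynomial.C (dg k n i))

/-- The element `v - D = 1 ⊗ v - D ⊗ 1 ∈ W`. -/
noncomputable def vmD (k : Type) [Field k] (n : ℕ) : Wc k n :=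
  (Polynomial.C (Polynomial.X : Av k n) : Wc k n) - (Polynomial.X : Wc k n)

/-- The map `D` on `W`: multiplication by the outer variable. -/
noncomputable def Dm (k : Type) [Field k] (n : ℕ) : Wc k n →ₗ[k] Wc k n :=
  LinearMap.mulLeft k (Polynomial.X : Wc k n)

/-- The condition characterizing the conformal products of `W`:
`(1 ⊗ f) ∘ₘ (1 ⊗ g) = 1 ⊗ f·(∂ᵐ g/∂vᵐ)` together with axioms (C2) and (C3). -/
def IsWProd (k : Type) [Field k] (n : ℕ)
    (P : ℕ → Wc k n →ₗ[k] Wc k n →ₗ[k] Wc k n) : Prop :=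
  (∀ (m : ℕ) (f g : Av k n),
      P m (Polynomial.C f) (Polynomial.C g)
        = Polynomial.C (f * (fun q => Polynomial.derivative q)^[m] g)) ∧
  (∀ (m : ℕ) (a b : Wc k n), P m (Dm k n a) b = -((m : k)) • P (m - 1) a b) ∧
  (∀ (m : ℕ) (a b : Wc k n),
      P m a (Dm k n b) = Dm k n (P m a b) + (m : k) • P (m - 1) a b)

/-- The locality function `N_W(x,y) = min {N | x ∘ₘ y = 0 for all m ≥ N}`. -/
noncomputable def locNW (k : Type) [Field k] (n : ℕ)
    (P : ℕ → Wc k n →ₗ[k] Wc k n →ₗ[k] Wc k n) (x y : Wc k n) : ℕ :=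
  sInf {N : ℕ | ∀ m, N ≤ m → P m x y = 0}

/-- The smallest `D`-invariant subspace of `W` closed under all the products and
containing a set `S`. -/
noncomputable def confCl (k : Type) [Field k] (n : ℕ)
    (P : ℕ → Wc k n →ₗ[k] Wc k n →ₗ[k] Wc k n) (S : Set (Wc k n)) :
    Submodule k (Wc k n) :=
  sInf {U : Submodule k (Wc k n) | S ⊆ U ∧ (∀ x ∈ U, Dm k n x ∈ U) ∧
    ∀ (m : ℕ), ∀ x ∈ U, ∀ y ∈ U, P m x y ∈ U}

/-- The conformal subalgebra `C₁ ⊆ W`, generated by `v - D`, `(v - D)ξᵢ`, `∂ᵢ`. -/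
noncomputable def C1sub (k : Type) [Field k] (n : ℕ)
    (P : ℕ → Wc k n →ₗ[k] Wc k n →ₗ[k] Wc k n) : Submodule k (Wc k n) :=
  confCl k n P
    ({vmD k n} ∪ Set.range (fun i => vmD k n * xiW k n i) ∪ Set.range (paW k n))

/-- The conformal subalgebra `C₂ ⊆ W`, generated by `v`, `vξᵢ`, `∂ᵢ`. -/
noncomputable def C2sub (k : Type) [Field k] (n : ℕ)
    (P : ℕ → Wc k n →ₗ[k] Wc k n →ₗ[k] Wc k n) : Submodule k (Wc k n) :=
  confCl k n P
    ({vW k n} ∪ Set.range (fun i => vW k n * xiW k n i) ∪ Set.range (paW k n))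
/-! ### The elements `ξ_I`, `∂ᵢ(ξ_I)` and `ψ₁(g_I)`, `ψ₂(g_I)` -/

/-- `ξ_I = ξ_{i₁} ⋯ ξ_{i_r} ∈ Aₙ` for `I = {i₁ < … < i_r}` (`ξ_∅ = 1`). -/
noncomputable def xiI (k : Type) [Field k] (n : ℕ) (I : Finset (Fin n)) : An k n :=
  ((I.sort (· ≤ ·)).map (xg k n)).prod

/-- `∂_J = ∂_{j₁} ⋯ ∂_{j_q} ∈ Aₙ` for `J = {j₁ < … < j_q}` (`∂_∅ = 1`). -/
noncomputable def dgJ (k : Type) [Field k] (n : ℕ) (J : Finset (Fin n)) : An k n :=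
  ((J.sort (· ≤ ·)).map (dg k n)).prod

/-- `∂ᵢ(ξ_I) = (-1)^{t-1} ξ_{I∖{i}}` if `i` is the `t`-th element of `I`, else `0`. -/
noncomputable def dxi (k : Type) [Field k] (n : ℕ) (i : Fin n) (I : Finset (Fin n)) :
    An k n :=
  if i ∈ I then ((-1 : k) ^ (I.filter (fun j => j < i)).card) • xiI k n (I.erase i)
  else 0

/-- The embedding `a ↦ 1 ⊗ a : Aₙ → W`. -/
noncomputable def embA (k : Type) [Field k] (n : ℕ) (a : An k n) : Wc k n :=
  Polynomial.C (Polynomial.C a)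

/-- The map `a ↦ D ⊗ a : Aₙ → W`. -/
noncomputable def embD (k : Type) [Field k] (n : ℕ) (a : An k n) : Wc k n :=
  Polynomial.monomial 1 (Polynomial.C a)

/-- `ψ₁(g_I) = (2-|I|)(v-D)ξ_I + (-1)^{|I|} ∑ᵢ (D ⊗ ξᵢξ_I∂ᵢ + 1 ⊗ ∂ᵢ(ξ_I)∂ᵢ)`. -/
noncomputable def ψ1 (k : Type) [Field k] (n : ℕ) (I : Finset (Fin n)) : Wc k n :=
  ((2 : k) - (I.card : k)) • (vmD k n * embA k n (xiI k n I))
    + ((-1 : k) ^ I.card) •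
      ∑ i : Fin n,
        (embD k n (xg k n i * xiI k n I * dg k n i) + embA k n (dxi k n i I * dg k n i))

/-- `ψ₂(g_I) = (2-|I|)·vξ_I - ∑ᵢ (D ⊗ ∂ᵢξᵢξ_I + 1 ⊗ ∂ᵢ·∂ᵢ(ξ_I))`. -/
noncomputable def ψ2 (k : Type) [Field k] (n : ℕ) (I : Finset (Fin n)) : Wc k n :=
  ((2 : k) - (I.card : k)) • (vW k n * embA k n (xiI k n I))
    - ∑ i : Fin n,
        (embD k n (dg k n i * xg k n i * xiI k n I) + embA k n (dg k n i * dxi k n i I))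
/-! ### Auxiliary machinery for Statement 14 -/

namespace S14

open Polynomial

set_option maxHeartbeats 1000000
set_option synthInstance.maxHeartbeats 400000

set_option linter.unusedSectionVars false

section ConfClLemmas

variable {k : Type} [Field k] {n : ℕ}
variable (Pr : ℕ → Wc k n →ₗ[k] Wc k n →ₗ[k] Wc k n)

lemma mem_confCl_of_mem {S : Set (Wc k n)} {x : Wc k n} (hx : x ∈ S) :
    x ∈ confCl k n Pr S := by
  rw [confCl, Submodule.mem_sInf]
  exact fun U hU => hU.1 hx

lemma confCl_D {S : Set (Wc k n)} {x : Wc k n} (hx : x ∈ confCl k n Pr S) :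
    Dm k n x ∈ confCl k n Pr S := by
  rw [confCl, Submodule.mem_sInf] at hx ⊢
  exact fun U hU => hU.2.1 x (hx U hU)

lemma confCl_P {S : Set (Wc k n)} (m : ℕ) {x y : Wc k n}
    (hx : x ∈ confCl k n Pr S) (hy : y ∈ confCl k n Pr S) :
    Pr m x y ∈ confCl k n Pr S := by
  rw [confCl, Submodule.mem_sInf] at hx hy ⊢
  exact fun U hU => hU.2.2 m x (hx U hU) y (hy U hU)

lemma confCl_le {S : Set (Wc k n)} {U : Submodule k (Wc k n)}
    (hS : S ⊆ U) (hD : ∀ x ∈ U, Dm k n x ∈ U)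
    (hP : ∀ (m : ℕ), ∀ x ∈ U, ∀ y ∈ U, Pr m x y ∈ U) :
    confCl k n Pr S ≤ U :=
  sInf_le ⟨hS, hD, hP⟩

lemma confCl_le_confCl {S T : Set (Wc k n)} (h : S ⊆ (confCl k n Pr T : Set (Wc k n))) :
    confCl k n Pr S ≤ confCl k n Pr T :=
  confCl_le Pr h (fun _ hx => confCl_D Pr hx) (fun m _ hx _ hy => confCl_P Pr m hx hy)

end ConfClLemmas

section AnLemmas

variable (k : Type) [Field k] [CharZero k] (n : ℕ)

lemma xg_rel (i j : Fin n) : xg k n i * xg k n j + xg k n j * xg k n i = 0 := by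
  have h := RingQuot.mkAlgHom_rel k (ARel.xixi (k := k) (n := n) i j)
  simpa only [map_add, map_mul, map_zero, xg] using h

lemma dg_rel (i j : Fin n) : dg k n i * dg k n j + dg k n j * dg k n i = 0 := by
  have h := RingQuot.mkAlgHom_rel k (ARel.papa (k := k) (n := n) i j)
  simpa only [map_add, map_mul, map_zero, dg] using h

lemma dgxg_rel (i j : Fin n) :
    dg k n i * xg k n j + xg k n j * dg k n i = if i = j then 1 else 0 := by
  have h := RingQuot.mkAlgHom_rel k (ARel.paxi (k := k) (n := n) i j)
  simp only [map_add, map_mul] at h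
  simp only [dg, xg]
  rw [h, apply_ite (RingQuot.mkAlgHom k (ARel k n)), map_one, map_zero]

lemma xg_anti (i j : Fin n) : xg k n i * xg k n j = -(xg k n j * xg k n i) :=
  eq_neg_of_add_eq_zero_left (xg_rel k n i j)

lemma dg_anti (i j : Fin n) : dg k n i * dg k n j = -(dg k n j * dg k n i) :=
  eq_neg_of_add_eq_zero_left (dg_rel k n i j)

lemma xg_sq (i : Fin n) : xg k n i * xg k n i = 0 := by
  have h : (2 : k) • (xg k n i * xg k n i) = 0 := by
    rw [two_smul]; exact xg_rel k n i i
  have h2 : (2 : k) ≠ 0 := two_ne_zero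
  rcases smul_eq_zero.mp h with h' | h'
  · exact absurd h' h2
  · exact h'

lemma dg_sq (i : Fin n) : dg k n i * dg k n i = 0 := by
  have h : (2 : k) • (dg k n i * dg k n i) = 0 := by
    rw [two_smul]; exact dg_rel k n i i
  rcases smul_eq_zero.mp h with h' | h'
  · exact absurd h' two_ne_zero
  · exact h'

lemma dg_xg (i j : Fin n) :
    dg k n i * xg k n j = (if i = j then 1 else 0) - xg k n j * dg k n i :=
  eq_sub_of_add_eq (dgxg_rel k n i j)

lemma xg_dg (j i : Fin n) :
    xg k n j * dg k n i = (if i = j then 1 else 0) - dg k n i * xg k n j := by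
  rw [eq_sub_iff_add_eq, add_comm]; exact dgxg_rel k n i j

lemma dg_xg_self (i : Fin n) : dg k n i * xg k n i = 1 - xg k n i * dg k n i := by
  simpa using dg_xg k n i i

lemma xg_dg_self (i : Fin n) : xg k n i * dg k n i = 1 - dg k n i * xg k n i := by
  simpa using xg_dg k n i i

lemma xg_dg_ne {j i : Fin n} (h : i ≠ j) :
    xg k n j * dg k n i = -(dg k n i * xg k n j) := by
  rw [xg_dg, if_neg h, zero_sub]

lemma dg_xg_ne {i j : Fin n} (h : i ≠ j) :
    dg k n i * xg k n j = -(xg k n j * dg k n i) := by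
  rw [dg_xg, if_neg h, zero_sub]

/-- `c = ∑ᵢ ∂ᵢξᵢ`. -/
noncomputable def cA : An k n := ∑ i : Fin n, dg k n i * xg k n i

lemma xg_c (j : Fin n) : xg k n j * cA k n = cA k n * xg k n j + xg k n j := by
  have key : ∀ i : Fin n, xg k n j * (dg k n i * xg k n i)
      = dg k n i * xg k n i * xg k n j + (if i = j then xg k n i else 0) := by
    intro i
    rw [← mul_assoc, xg_dg k n j i, sub_mul, ite_mul, one_mul, zero_mul,
        mul_assoc, xg_anti k n j i, mul_neg, sub_neg_eq_add, ← mul_assoc, add_comm]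
  calc xg k n j * cA k n = ∑ i : Fin n, xg k n j * (dg k n i * xg k n i) := by
        rw [cA, Finset.mul_sum]
    _ = ∑ i : Fin n, (dg k n i * xg k n i * xg k n j + (if i = j then xg k n i else 0)) :=
        Finset.sum_congr rfl (fun i _ => key i)
    _ = cA k n * xg k n j + xg k n j := by
        rw [Finset.sum_add_distrib, Finset.sum_ite_eq' Finset.univ j (fun i => xg k n i),
          if_pos (Finset.mem_univ j), cA, Finset.sum_mul]

lemma c_dg (i : Fin n) : cA k n * dg k n i = dg k n i + dg k n i * cA k n := by
  have key : ∀ j : Fin n, (dg k n j * xg k n j) * dg k n i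
      = (if i = j then dg k n j else 0) + dg k n i * (dg k n j * xg k n j) := by
    intro j
    rw [mul_assoc, xg_dg k n j i, mul_sub, mul_ite, mul_one, mul_zero, ← mul_assoc,
      dg_anti k n j i, neg_mul, sub_neg_eq_add, mul_assoc]
  calc cA k n * dg k n i = ∑ j : Fin n, (dg k n j * xg k n j) * dg k n i := by
        rw [cA, Finset.sum_mul]
    _ = ∑ j : Fin n, ((if i = j then dg k n j else 0) + dg k n i * (dg k n j * xg k n j)) :=
        Finset.sum_congr rfl (fun j _ => key j)
    _ = dg k n i + dg k n i * cA k n := by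
        rw [Finset.sum_add_distrib, Finset.sum_ite_eq Finset.univ i (fun j => dg k n j),
          if_pos (Finset.mem_univ i), cA, Finset.mul_sum]

lemma c_sq : cA k n * cA k n = cA k n + ∑ j : Fin n, dg k n j * (cA k n * xg k n j) := by
  calc cA k n * cA k n = ∑ j : Fin n, dg k n j * (xg k n j * cA k n) := by
        rw [cA, Finset.sum_mul]
        exact Finset.sum_congr rfl fun j _ => mul_assoc _ _ _
    _ = ∑ j : Fin n, (dg k n j * (cA k n * xg k n j) + dg k n j * xg k n j) := by
        refine Finset.sum_congr rfl fun j _ => ?_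
        rw [xg_c, mul_add]
    _ = cA k n + ∑ j : Fin n, dg k n j * (cA k n * xg k n j) := by
        rw [Finset.sum_add_distrib, ← cA, add_comm]

end AnLemmas

section WcLemmas

variable (k : Type) [Field k] [CharZero k] (n : ℕ)

lemma Dm_apply (x : Wc k n) : Dm k n x = X * x := by
  simp [Dm]

variable {Pr : ℕ → Wc k n →ₗ[k] Wc k n →ₗ[k] Wc k n} (hPr : IsWProd k n Pr)

lemma sumCX {s : Finset (Fin n)} (f : Fin n → An k n) :
    ∑ j ∈ s, (C (Polynomial.C (f j) * X) : Wc k n)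
      = C (Polynomial.C (∑ j ∈ s, f j) * X) := by
  have h : (Polynomial.C (∑ j ∈ s, f j) : Av k n) = ∑ j ∈ s, Polynomial.C (f j) :=
    map_sum _ _ _
  rw [h, Finset.sum_mul, map_sum]

lemma sumC {s : Finset (Fin n)} (f : Fin n → An k n) :
    ∑ j ∈ s, (C (Polynomial.C (f j)) : Wc k n) = C (Polynomial.C (∑ j ∈ s, f j)) := by
  have h : (Polynomial.C (∑ j ∈ s, f j) : Av k n) = ∑ j ∈ s, Polynomial.C (f j) :=
    map_sum _ _ _
  rw [h, map_sum]

lemma sumCC_X {s : Finset (Fin n)} (f : Fin n → An k n) :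
    ∑ j ∈ s, (C (Polynomial.C (f j)) : Wc k n) * X
      = C (Polynomial.C (∑ j ∈ s, f j)) * X := by
  rw [← Finset.sum_mul, sumC k n]


include hPr

lemma pr0_CC (f g : Av k n) : Pr 0 (C f) (C g) = C (f * g) := by
  simpa using hPr.1 0 f g

lemma pr1_CC (f g : Av k n) : Pr 1 (C f) (C g) = C (f * derivative g) := by
  simpa using hPr.1 1 f g

lemma pr0_Dleft (x y : Wc k n) : Pr 0 (X * x) y = 0 := by
  have h := hPr.2.1 0 x y
  rw [Dm_apply] at h
  rw [h]
  simp only [Nat.cast_zero, neg_zero, zero_smul]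

lemma pr1_Dleft (x y : Wc k n) : Pr 1 (X * x) y = -Pr 0 x y := by
  have h := hPr.2.1 1 x y
  rw [Dm_apply] at h
  rw [h]
  simp only [Nat.cast_one, neg_smul, one_smul]

lemma pr0_Dright (x y : Wc k n) : Pr 0 x (X * y) = X * Pr 0 x y := by
  have h := hPr.2.2 0 x y
  rw [Dm_apply, Dm_apply] at h
  rw [h]
  simp only [Nat.cast_zero, zero_smul, add_zero]

lemma pr1_Dright (x y : Wc k n) : Pr 1 x (X * y) = X * Pr 1 x y + Pr 0 x y := by
  have h := hPr.2.2 1 x y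
  rw [Dm_apply, Dm_apply] at h
  rw [h]
  simp only [Nat.cast_one, one_smul]

lemma PR0 (f g f' g' : Av k n) :
    Pr 0 (C f + C g * X) (C f' + C g' * X)
      = C (f * f') + C (f * g') * X := by
  rw [show (C g * X : Wc k n) = X * C g from (Polynomial.X_mul).symm,
    show (C g' * X : Wc k n) = X * C g' from (Polynomial.X_mul).symm]
  simp only [map_add, LinearMap.add_apply, pr0_Dleft k n hPr, pr0_Dright k n hPr,
    pr0_CC k n hPr, add_zero]
  rw [Polynomial.X_mul]

lemma PR1 (f g f' g' : Av k n) :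
    Pr 1 (C f + C g * X) (C f' + C g' * X)
      = C (f * derivative f' + (f * g' - g * f')) + C (f * derivative g' - g * g') * X := by
  rw [show (C g * X : Wc k n) = X * C g from (Polynomial.X_mul).symm,
    show (C g' * X : Wc k n) = X * C g' from (Polynomial.X_mul).symm]
  simp only [map_add, LinearMap.add_apply, pr1_Dleft k n hPr, pr1_Dright k n hPr,
    pr1_CC k n hPr, pr0_CC k n hPr, pr0_Dleft k n hPr, pr0_Dright k n hPr]
  simp only [map_add, map_sub, add_mul, sub_mul, Polynomial.X_mul]
  abel

end WcLemmas

section Psi2Forms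

variable (k : Type) [Field k] [CharZero k] (n : ℕ)

lemma xiI_empty : xiI k n ∅ = 1 := by
  simp [xiI]

lemma xiI_single (i : Fin n) : xiI k n {i} = xg k n i := by
  simp [xiI, Finset.sort_singleton]

lemma xiI_pair {i j : Fin n} (h : i < j) : xiI k n {i, j} = xg k n i * xg k n j := by
  rw [xiI, Finset.sort_insert]
  · simp [Finset.sort_singleton]
  · intro b hb
    rw [Finset.mem_singleton] at hb
    exact hb ▸ h.le
  · simp [h.ne]

lemma dxi_not_mem {i : Fin n} {I : Finset (Fin n)} (h : i ∉ I) : dxi k n i I = 0 :=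
  if_neg h

lemma dxi_single (i : Fin n) : dxi k n i {i} = 1 := by
  rw [dxi, if_pos (Finset.mem_singleton_self i)]
  rw [Finset.filter_singleton, if_neg (lt_irrefl i), Finset.card_empty, pow_zero,
    Finset.erase_singleton, xiI_empty, one_smul]

lemma dxi_pair_lo {i j : Fin n} (h : i < j) : dxi k n i {i, j} = xg k n j := by
  rw [dxi, if_pos (Finset.mem_insert_self i {j})]
  have hf : ({i, j} : Finset (Fin n)).filter (fun a => a < i) = ∅ := by
    rw [Finset.filter_insert, if_neg (lt_irrefl i), Finset.filter_singleton,
      if_neg (asymm h)]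
  have he : ({i, j} : Finset (Fin n)).erase i = {j} := by
    rw [Finset.erase_insert]
    simp [h.ne]
  rw [hf, he, Finset.card_empty, pow_zero, xiI_single, one_smul]

lemma dxi_pair_hi {i j : Fin n} (h : i < j) : dxi k n j {i, j} = -xg k n i := by
  rw [dxi, if_pos (by simp : j ∈ ({i, j} : Finset (Fin n)))]
  have hf : ({i, j} : Finset (Fin n)).filter (fun a => a < j) = {i} := by
    rw [Finset.filter_insert, if_pos h, Finset.filter_singleton, if_neg (lt_irrefl j)]
    rfl
  have he : ({i, j} : Finset (Fin n)).erase j = {i} := by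
    rw [Finset.pair_comm, Finset.erase_insert]
    simp [h.ne']
  rw [hf, he, Finset.card_singleton, pow_one, xiI_single, neg_smul, one_smul]

lemma vW_embA (a : An k n) : vW k n * embA k n a = C (Polynomial.C a * X) := by
  rw [vW, embA, ← map_mul, Polynomial.X_mul]

lemma embD_eq (a : An k n) : embD k n a = C (Polynomial.C a) * X := by
  rw [embD, Polynomial.C_mul_X_eq_monomial]

lemma psi2_empty :
    ψ2 k n ∅ = C ((2 : k) • (X : Av k n)) + C (Polynomial.C (-cA k n)) * X := by
  rw [ψ2]
  have h1 : ∀ i : Fin n, dxi k n i (∅ : Finset (Fin n)) = 0 :=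
    fun i => dxi_not_mem k n (Finset.notMem_empty i)
  simp only [xiI_empty, Finset.card_empty, Nat.cast_zero, sub_zero, mul_one, h1,
    mul_zero, embA, map_zero, add_zero, embD_eq]
  rw [← Finset.sum_mul, ← map_sum, ← map_sum]
  have : vW k n * Polynomial.C (Polynomial.C 1) = C (X : Av k n) := by
    rw [map_one, map_one, mul_one, vW]
  rw [this, ← cA, sub_eq_add_neg, ← neg_mul, ← map_neg, ← map_neg, Polynomial.smul_C]

lemma psi2_single (i : Fin n) :
    ψ2 k n {i} = C (Polynomial.C (xg k n i) * X - Polynomial.C (dg k n i))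
      + C (Polynomial.C (-(cA k n * xg k n i))) * X := by
  rw [ψ2]
  have h1 : ∀ l : Fin n, embD k n (dg k n l * xg k n l * xiI k n {i})
        + embA k n (dg k n l * dxi k n l {i})
      = C (Polynomial.C (dg k n l * xg k n l * xg k n i)) * X
        + (if l = i then C (Polynomial.C (dg k n i)) else 0) := by
    intro l
    rw [embD_eq, xiI_single]
    congr 1
    by_cases h : l = i
    · subst h; rw [if_pos rfl, dxi_single, mul_one, embA]
    · rw [if_neg h, dxi_not_mem k n (by simp [h] : l ∉ ({i} : Finset (Fin n))),
        mul_zero, embA, map_zero, map_zero]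
  simp only [h1]
  rw [Finset.sum_add_distrib, Finset.sum_ite_eq' Finset.univ i
    (fun _ => C (Polynomial.C (dg k n i))), if_pos (Finset.mem_univ i),
    ← Finset.sum_mul, ← map_sum, ← map_sum]
  have h2 : ∑ l : Fin n, dg k n l * xg k n l * xg k n i = cA k n * xg k n i := by
    rw [cA, Finset.sum_mul]
  rw [h2, xiI_single, Finset.card_singleton, Nat.cast_one,
    (by norm_num : (2 : k) - 1 = 1), one_smul, vW_embA]
  simp only [map_sub, map_neg, neg_mul]
  abel

lemma psi2_pair {i j : Fin n} (h : i < j) :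
    ψ2 k n {i, j} = C (Polynomial.C (-(dg k n i * xg k n j - dg k n j * xg k n i)))
      + C (Polynomial.C (-(cA k n * (xg k n i * xg k n j)))) * X := by
  rw [ψ2]
  have hc : ({i, j} : Finset (Fin n)).card = 2 := by
    rw [Finset.card_insert_of_notMem (by simp [h.ne]), Finset.card_singleton]
  rw [hc, xiI_pair k n h]
  have h1 : ∀ l : Fin n, embD k n (dg k n l * xg k n l * (xg k n i * xg k n j))
        + embA k n (dg k n l * dxi k n l {i, j})
      = C (Polynomial.C (dg k n l * xg k n l * (xg k n i * xg k n j))) * X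
        + ((if l = i then C (Polynomial.C (dg k n i * xg k n j)) else 0)
          + (if l = j then C (Polynomial.C (-(dg k n j * xg k n i))) else 0)) := by
    intro l
    rw [embD_eq]
    congr 1
    by_cases hi : l = i
    · subst hi
      rw [if_pos rfl, if_neg (by exact h.ne), dxi_pair_lo k n h, embA, add_zero]
    · by_cases hj : l = j
      · subst hj
        rw [if_neg hi, if_pos rfl, dxi_pair_hi k n h, embA, zero_add, mul_neg,
          map_neg, map_neg]
      · rw [if_neg hi, if_neg hj,
          dxi_not_mem k n (by simp [hi, hj] : l ∉ ({i, j} : Finset (Fin n))),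
          mul_zero, embA, map_zero, map_zero, add_zero]
  simp only [h1]
  rw [Finset.sum_add_distrib, Finset.sum_add_distrib,
    Finset.sum_ite_eq' Finset.univ i (fun _ => C (Polynomial.C (dg k n i * xg k n j))),
    Finset.sum_ite_eq' Finset.univ j
      (fun _ => C (Polynomial.C (-(dg k n j * xg k n i)))),
    if_pos (Finset.mem_univ i), if_pos (Finset.mem_univ j),
    ← Finset.sum_mul, ← map_sum, ← map_sum]
  have h2 : ∑ l : Fin n, dg k n l * xg k n l * (xg k n i * xg k n j)
      = cA k n * (xg k n i * xg k n j) := by rw [cA, Finset.sum_mul]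
  rw [h2, Nat.cast_ofNat, sub_self, zero_smul, zero_sub]
  simp only [map_neg, map_sub, neg_add, neg_neg, neg_sub, neg_mul, smul_mul_assoc]
  abel

/-- The normalized `ε_{ij} • ψ₂{i,j}`. -/
noncomputable def bEl (i j : Fin n) : Wc k n :=
  C (Polynomial.C (-(dg k n i * xg k n j - dg k n j * xg k n i)))
    + C (Polynomial.C (-(cA k n * (xg k n i * xg k n j)))) * X

lemma smul_psi2_pair {i j : Fin n} (hij : i ≠ j) :
    (if i < j then (1 : k) else -1) • ψ2 k n {i, j} = bEl k n i j := by
  rcases hij.lt_or_gt with h | h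
  · rw [if_pos h, one_smul, psi2_pair k n h, bEl]
  · rw [if_neg (asymm h), Finset.pair_comm, psi2_pair k n h, bEl, xg_anti k n j i]
    simp only [neg_smul, one_smul, neg_add, map_neg, map_sub, mul_neg, neg_neg, neg_sub,
      neg_mul, smul_mul_assoc]

end Psi2Forms

section SumLemmas

variable (k : Type) [Field k] [CharZero k] (n : ℕ)

lemma xg_xx (j i : Fin n) : xg k n j * (xg k n i * xg k n j) = 0 := by
  rw [← mul_assoc, xg_anti k n j i, neg_mul, mul_assoc, xg_sq, mul_zero, neg_zero]

lemma xcx (j : Fin n) : xg k n j * (cA k n * xg k n j) = 0 := by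
  rw [← mul_assoc, xg_c, add_mul, mul_assoc, xg_sq, mul_zero, add_zero]

lemma xcxx (j i : Fin n) : xg k n j * (cA k n * (xg k n i * xg k n j)) = 0 := by
  rw [← mul_assoc, xg_c, add_mul, mul_assoc, xg_xx, mul_zero, add_zero]

lemma sum_Dx (i : Fin n) :
    ∑ j ∈ Finset.univ.erase i,
      (dg k n i * xg k n j - dg k n j * xg k n i) * xg k n j = cA k n * xg k n i := by
  have per : ∀ j : Fin n, (dg k n i * xg k n j - dg k n j * xg k n i) * xg k n j
      = dg k n j * xg k n j * xg k n i := by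
    intro j
    rw [sub_mul, mul_assoc, xg_sq, mul_zero, mul_assoc, mul_assoc, xg_anti k n i j,
      mul_neg, zero_sub, neg_neg]
  simp only [per]
  rw [Finset.sum_erase _ (by rw [mul_assoc, xg_sq, mul_zero]),
    ← Finset.sum_mul, ← cA]

lemma sum_dD (i : Fin n) :
    ∑ j ∈ Finset.univ.erase i,
      dg k n j * (dg k n i * xg k n j - dg k n j * xg k n i)
      = -(dg k n i * cA k n) := by
  have per : ∀ j : Fin n, dg k n j * (dg k n i * xg k n j - dg k n j * xg k n i)
      = -(dg k n i * (dg k n j * xg k n j)) := by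
    intro j
    rw [mul_sub, ← mul_assoc, dg_anti k n j i, neg_mul, ← mul_assoc, dg_sq,
      zero_mul, sub_zero, mul_assoc]
  simp only [per]
  rw [Finset.sum_neg_distrib, ← Finset.mul_sum,
    Finset.sum_erase_eq_sub (Finset.mem_univ i), ← cA, mul_sub, ← mul_assoc, dg_sq,
    zero_mul, sub_zero]

lemma sum_xD (i : Fin n) :
    ∑ j ∈ Finset.univ.erase i,
      xg k n j * (dg k n i * xg k n j - dg k n j * xg k n i)
      = cA k n * xg k n i - (n - 1 : ℕ) • xg k n i := by
  have per : ∀ j ∈ Finset.univ.erase i,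
      xg k n j * (dg k n i * xg k n j - dg k n j * xg k n i)
      = dg k n j * xg k n j * xg k n i - xg k n i := by
    intro j hj
    have hne : i ≠ j := (Finset.ne_of_mem_erase hj).symm
    rw [mul_sub, ← mul_assoc, xg_dg_ne k n hne, neg_mul, mul_assoc, xg_sq, mul_zero,
      neg_zero, zero_sub, ← mul_assoc, xg_dg_self, sub_mul, one_mul, neg_sub]
  rw [Finset.sum_congr rfl per, Finset.sum_sub_distrib, Finset.sum_const,
    Finset.card_erase_of_mem (Finset.mem_univ i), Finset.card_univ, Fintype.card_fin,
    Finset.sum_erase _ (by rw [mul_assoc, xg_sq, mul_zero]), ← Finset.sum_mul, ← cA]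

lemma sum_Dd (i : Fin n) :
    ∑ j ∈ Finset.univ.erase i,
      (dg k n i * xg k n j - dg k n j * xg k n i) * dg k n j
      = (n - 1 : ℕ) • dg k n i - dg k n i * cA k n := by
  have per : ∀ j ∈ Finset.univ.erase i,
      (dg k n i * xg k n j - dg k n j * xg k n i) * dg k n j
      = dg k n i - dg k n i * (dg k n j * xg k n j) := by
    intro j hj
    have hji : j ≠ i := Finset.ne_of_mem_erase hj
    rw [sub_mul, mul_assoc, xg_dg_self, mul_sub, mul_one, mul_assoc,
      xg_dg_ne k n hji, mul_neg, ← mul_assoc (dg k n j) (dg k n j) (xg k n i),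
      dg_sq, zero_mul, neg_zero, sub_zero]
  rw [Finset.sum_congr rfl per, Finset.sum_sub_distrib, Finset.sum_const,
    Finset.card_erase_of_mem (Finset.mem_univ i), Finset.card_univ, Fintype.card_fin,
    ← Finset.mul_sum, Finset.sum_erase_eq_sub (Finset.mem_univ i), ← cA, mul_sub,
    ← mul_assoc, dg_sq, zero_mul, sub_zero]

lemma sum_dcxx (i : Fin n) :
    ∑ j ∈ Finset.univ.erase i, dg k n j * (cA k n * (xg k n i * xg k n j))
      = cA k n * xg k n i - cA k n * (cA k n * xg k n i) := by
  have h1 : cA k n * (cA k n * xg k n i)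
      = cA k n * xg k n i + ∑ j : Fin n, dg k n j * (cA k n * (xg k n j * xg k n i)) := by
    rw [← mul_assoc, c_sq, add_mul, Finset.sum_mul]
    congr 1
    exact Finset.sum_congr rfl fun j _ => by rw [mul_assoc, mul_assoc]
  have h3 : ∑ j : Fin n, dg k n j * (cA k n * (xg k n j * xg k n i))
      = -∑ j ∈ Finset.univ.erase i, dg k n j * (cA k n * (xg k n i * xg k n j)) := by
    rw [← Finset.sum_neg_distrib,
      Finset.sum_erase _ (by rw [xg_sq, mul_zero, mul_zero, neg_zero])]
    exact Finset.sum_congr rfl fun j _ => by rw [xg_anti k n j i, mul_neg, mul_neg]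
  rw [h3] at h1
  rw [h1]
  abel

lemma xg_cx_split (i j : Fin n) : xg k n i * (cA k n * xg k n j)
    = cA k n * (xg k n i * xg k n j) + xg k n i * xg k n j := by
  rw [← mul_assoc, xg_c, add_mul, mul_assoc]

lemma sum_dxx (i : Fin n) :
    ∑ j ∈ Finset.univ.erase i, dg k n j * (xg k n i * xg k n j)
      = -(cA k n * xg k n i) := by
  have per : ∀ j ∈ Finset.univ.erase i, dg k n j * (xg k n i * xg k n j)
      = -(xg k n i * (dg k n j * xg k n j)) := by
    intro j hj
    have hji : j ≠ i := Finset.ne_of_mem_erase hj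
    rw [← mul_assoc, dg_xg_ne k n hji, neg_mul, mul_assoc]
  rw [Finset.sum_congr rfl per, Finset.sum_neg_distrib, ← Finset.mul_sum,
    Finset.sum_erase_eq_sub (Finset.mem_univ i), ← cA, mul_sub, ← mul_assoc,
    xg_dg_self, sub_mul, one_mul, mul_assoc, xg_sq, mul_zero, sub_zero, xg_c]
  rw [add_sub_assoc, sub_self, add_zero]

lemma sum_Dcx (i : Fin n) :
    ∑ j ∈ Finset.univ.erase i,
      (dg k n i * xg k n j - dg k n j * xg k n i) * (cA k n * xg k n j)
      = cA k n * (cA k n * xg k n i) := by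
  have per : ∀ j ∈ Finset.univ.erase i,
      (dg k n i * xg k n j - dg k n j * xg k n i) * (cA k n * xg k n j)
      = -(dg k n j * (cA k n * (xg k n i * xg k n j)))
        + -(dg k n j * (xg k n i * xg k n j)) := by
    intro j _
    rw [sub_mul, mul_assoc, xcx, mul_zero, zero_sub, mul_assoc, xg_cx_split,
      mul_add, neg_add]
  rw [Finset.sum_congr rfl per, Finset.sum_add_distrib, Finset.sum_neg_distrib,
    Finset.sum_neg_distrib, sum_dcxx, sum_dxx, neg_neg, neg_sub]
  abel

end SumLemmas

section MulHelpers

variable {R : Type} [Semiring R]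

lemma C_mul_CX (a b : R) : Polynomial.C a * (Polynomial.C b * X) = Polynomial.C (a * b) * X := by
  rw [← mul_assoc, ← map_mul]

lemma CX_mul_C (a b : R) : (Polynomial.C a * X) * Polynomial.C b = Polynomial.C (a * b) * X := by
  rw [mul_assoc, Polynomial.X_mul, ← mul_assoc, ← map_mul]

lemma CX_mul_CX (a b : R) :
    (Polynomial.C a * X) * (Polynomial.C b * X) = Polynomial.C (a * b) * (X * X) := by
  rw [mul_assoc, ← mul_assoc X (Polynomial.C b) X, Polynomial.X_mul,
    mul_assoc (Polynomial.C b) X X, ← mul_assoc (Polynomial.C a) (Polynomial.C b),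
    ← map_mul]

end MulHelpers

section Identities

variable (k : Type) [Field k] [CharZero k] (n : ℕ)
variable {Pr : ℕ → Wc k n →ₗ[k] Wc k n →ₗ[k] Wc k n} (hPr : IsWProd k n Pr)

lemma xdx_one (j : Fin n) : xg k n j * dg k n j + dg k n j * xg k n j = 1 := by
  rw [add_comm]
  simpa using dgxg_rel k n j j

lemma cxc (i : Fin n) :
    (cA k n * xg k n i) * cA k n = cA k n * (cA k n * xg k n i) + cA k n * xg k n i := by
  rw [mul_assoc, xg_c, mul_add]


include hPr

lemma pr0_single_single (j : Fin n) :
    Pr 0 (ψ2 k n {j}) (ψ2 k n {j})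
      = -C (X : Av k n) + C (Polynomial.C (dg k n j * (cA k n * xg k n j))) * X := by
  rw [psi2_single k n j, PR0 k n hPr]
  have hff : (Polynomial.C (xg k n j) * X - Polynomial.C (dg k n j))
      * (Polynomial.C (xg k n j) * X - Polynomial.C (dg k n j)) = -(X : Av k n) := by
    rw [sub_mul, mul_sub, mul_sub, CX_mul_CX, xg_sq, map_zero, zero_mul, CX_mul_C,
      C_mul_CX, ← map_mul, dg_sq, map_zero, zero_sub, sub_zero, sub_eq_add_neg,
      ← neg_add, ← add_mul, ← map_add, xdx_one, map_one, one_mul]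
  have hfg : (Polynomial.C (xg k n j) * X - Polynomial.C (dg k n j))
      * (Polynomial.C (-(cA k n * xg k n j)) : Av k n)
      = Polynomial.C (dg k n j * (cA k n * xg k n j)) := by
    rw [sub_mul, CX_mul_C, mul_neg, xcx, neg_zero, map_zero, zero_mul, ← map_mul,
      mul_neg, map_neg, zero_sub, neg_neg]
  rw [hff, hfg, map_neg]

lemma pr1_empty_empty :
    Pr 1 (ψ2 k n ∅) (ψ2 k n ∅)
      = C ((4 : k) • (X : Av k n)) + C (-(Polynomial.C (cA k n * cA k n))) * X := by
  rw [psi2_empty, PR1 k n hPr]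
  rw [derivative_smul, Polynomial.derivative_X, Polynomial.derivative_C]
  rw [smul_mul_assoc, mul_smul_comm, smul_smul, mul_one,
    (by norm_num : (2 : k) * 2 = 4)]
  rw [smul_mul_assoc, mul_smul_comm, Polynomial.X_mul, sub_self, add_zero,
    mul_zero, ← map_mul, neg_mul_neg, zero_sub, map_neg]

lemma identity_v :
    ψ2 k n ∅ - Pr 1 (ψ2 k n ∅) (ψ2 k n ∅)
      - ∑ j : Fin n, Pr 0 (ψ2 k n {j}) (ψ2 k n {j})
    = ((n : k) - 2) • vW k n := by
  rw [pr1_empty_empty k n hPr, psi2_empty]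
  simp only [pr0_single_single k n hPr]
  rw [Finset.sum_add_distrib, Finset.sum_neg_distrib, Finset.sum_const,
    Finset.card_univ, Fintype.card_fin, ← Finset.sum_mul, ← map_sum, ← map_sum]
  have hS : ∑ j : Fin n, dg k n j * (cA k n * xg k n j)
      = cA k n * cA k n - cA k n := by
    rw [c_sq k n]; abel
  rw [hS, vW]
  simp only [map_sub, map_neg, sub_mul, neg_mul, ← Polynomial.smul_C]
  rw [show ((n : ℕ) • (C (X : Av k n) : Wc k n)) = ((n : ℕ) : k) • C (X : Av k n) from
    (Nat.cast_smul_eq_nsmul k n _).symm]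
  module

lemma pr0_single_bEl (i j : Fin n) :
    Pr 0 (ψ2 k n {j}) (bEl k n i j)
      = -(C (Polynomial.C (xg k n j * (dg k n i * xg k n j - dg k n j * xg k n i)) * X))
        + C (Polynomial.C (dg k n j * (dg k n i * xg k n j - dg k n j * xg k n i)))
        + C (Polynomial.C (dg k n j * (cA k n * (xg k n i * xg k n j)))) * X := by
  rw [psi2_single k n j, bEl, PR0 k n hPr]
  have hff : (Polynomial.C (xg k n j) * X - Polynomial.C (dg k n j))
      * (Polynomial.C (-(dg k n i * xg k n j - dg k n j * xg k n i)) : Av k n)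
      = -(Polynomial.C (xg k n j * (dg k n i * xg k n j - dg k n j * xg k n i)) * X)
        + Polynomial.C (dg k n j * (dg k n i * xg k n j - dg k n j * xg k n i)) := by
    rw [sub_mul, CX_mul_C, mul_neg, map_neg, neg_mul, ← map_mul, mul_neg, map_neg,
      sub_neg_eq_add]
  have hfg : (Polynomial.C (xg k n j) * X - Polynomial.C (dg k n j))
      * (Polynomial.C (-(cA k n * (xg k n i * xg k n j))) : Av k n)
      = Polynomial.C (dg k n j * (cA k n * (xg k n i * xg k n j))) := by
    rw [sub_mul, CX_mul_C, mul_neg, xcxx, neg_zero, map_zero, zero_mul, ← map_mul,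
      mul_neg, map_neg, zero_sub, neg_neg]
  rw [hff, hfg, map_add, map_neg]

lemma pr1_empty_single (i : Fin n) :
    Pr 1 (ψ2 k n ∅) (ψ2 k n {i})
      = C ((2 : k) • (Polynomial.C (xg k n i) * X)
            - (2 : k) • (Polynomial.C (cA k n * xg k n i) * X)
            + Polynomial.C (cA k n * xg k n i) * X - Polynomial.C (cA k n * dg k n i))
        + C (-(Polynomial.C (cA k n * (cA k n * xg k n i)))) * X := by
  rw [psi2_empty, psi2_single, PR1 k n hPr]
  have hdf : derivative (Polynomial.C (xg k n i) * X - Polynomial.C (dg k n i))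
      = (Polynomial.C (xg k n i) : Av k n) := by
    rw [derivative_sub, Polynomial.derivative_C_mul_X, Polynomial.derivative_C, sub_zero]
  have hdg : derivative (Polynomial.C (-(cA k n * xg k n i)) : Av k n) = 0 :=
    Polynomial.derivative_C
  rw [hdf, hdg]
  have e1 : ((2 : k) • (X : Av k n)) * Polynomial.C (xg k n i)
      = (2 : k) • (Polynomial.C (xg k n i) * X) := by
    rw [smul_mul_assoc, Polynomial.X_mul]
  have e2 : ((2 : k) • (X : Av k n)) * Polynomial.C (-(cA k n * xg k n i))
      = -((2 : k) • (Polynomial.C (cA k n * xg k n i) * X)) := by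
    rw [smul_mul_assoc, Polynomial.X_mul, map_neg, neg_mul, smul_neg]
  have e3 : (Polynomial.C (-cA k n) : Av k n)
        * (Polynomial.C (xg k n i) * X - Polynomial.C (dg k n i))
      = -(Polynomial.C (cA k n * xg k n i) * X) + Polynomial.C (cA k n * dg k n i) := by
    rw [mul_sub, C_mul_CX, ← map_mul, neg_mul, map_neg, neg_mul, neg_mul,
      map_neg, sub_neg_eq_add]
  have e4 : (Polynomial.C (-cA k n) : Av k n) * Polynomial.C (-(cA k n * xg k n i))
      = Polynomial.C (cA k n * (cA k n * xg k n i)) := by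
    rw [← map_mul, neg_mul_neg]
  rw [e1, e2, e3, e4, mul_zero, zero_sub, map_neg]
  congr 1
  congr 1
  abel

lemma identity_xi (hn1 : 1 ≤ n) (i : Fin n) :
    ψ2 k n {i} - Pr 1 (ψ2 k n ∅) (ψ2 k n {i})
      + ∑ j ∈ Finset.univ.erase i, Pr 0 (ψ2 k n {j}) (bEl k n i j)
    = ((n : k) - 2) • (C (Polynomial.C (xg k n i) * X) : Wc k n) := by
  simp only [pr0_single_bEl k n hPr]
  rw [pr1_empty_single k n hPr, psi2_single, Finset.sum_add_distrib,
    Finset.sum_add_distrib, Finset.sum_neg_distrib, sumCX k n, sumC k n, sumCC_X k n,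
    sum_xD k n i, sum_dD k n i, sum_dcxx k n i, c_dg k n i]
  have hcast : ((n - 1 : ℕ) • xg k n i) = ((n : k) - 1) • xg k n i := by
    rw [← Nat.cast_smul_eq_nsmul k (n - 1), Nat.cast_sub hn1, Nat.cast_one]
  rw [hcast]
  simp only [map_sub, map_add, map_neg, sub_mul, add_mul, neg_mul, map_smul,
    smul_mul_assoc, map_zero, ← Polynomial.smul_C]
  module

lemma pr0_bEl_single (i j : Fin n) :
    Pr 0 (bEl k n i j) (ψ2 k n {j})
      = -(C (Polynomial.C ((dg k n i * xg k n j - dg k n j * xg k n i) * xg k n j) * X))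
        + C (Polynomial.C ((dg k n i * xg k n j - dg k n j * xg k n i) * dg k n j))
        + C (Polynomial.C ((dg k n i * xg k n j - dg k n j * xg k n i) * (cA k n * xg k n j))) * X := by
  rw [psi2_single k n j, bEl, PR0 k n hPr]
  have hff : (Polynomial.C (-(dg k n i * xg k n j - dg k n j * xg k n i)) : Av k n)
      * (Polynomial.C (xg k n j) * X - Polynomial.C (dg k n j))
      = -(Polynomial.C ((dg k n i * xg k n j - dg k n j * xg k n i) * xg k n j) * X)
        + Polynomial.C ((dg k n i * xg k n j - dg k n j * xg k n i) * dg k n j) := by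
    rw [mul_sub, C_mul_CX, neg_mul, map_neg, neg_mul, ← map_mul, neg_mul, map_neg,
      sub_neg_eq_add]
  have hfg : (Polynomial.C (-(dg k n i * xg k n j - dg k n j * xg k n i)) : Av k n)
      * (Polynomial.C (-(cA k n * xg k n j)) : Av k n)
      = Polynomial.C ((dg k n i * xg k n j - dg k n j * xg k n i) * (cA k n * xg k n j)) := by
    rw [← map_mul, neg_mul_neg]
  rw [hff, hfg, map_add, map_neg]

lemma pr1_single_empty (i : Fin n) :
    Pr 1 (ψ2 k n {i}) (ψ2 k n ∅)
      = C ((2 : k) • (Polynomial.C (xg k n i) * X) - (2 : k) • Polynomial.C (dg k n i)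
            - Polynomial.C (xg k n i * cA k n) * X + Polynomial.C (dg k n i * cA k n)
            + (2 : k) • (Polynomial.C (cA k n * xg k n i) * X))
        + C (-(Polynomial.C ((cA k n * xg k n i) * cA k n))) * X := by
  rw [psi2_empty, psi2_single, PR1 k n hPr]
  have hdf : derivative ((2 : k) • (X : Av k n)) = (2 : k) • (1 : Av k n) := by
    rw [derivative_smul, Polynomial.derivative_X]
  have hdg : derivative (Polynomial.C (-cA k n) : Av k n) = 0 := Polynomial.derivative_C
  rw [hdf, hdg]
  have e1 : (Polynomial.C (xg k n i) * X - Polynomial.C (dg k n i)) * ((2 : k) • (1 : Av k n))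
      = (2 : k) • (Polynomial.C (xg k n i) * X) - (2 : k) • Polynomial.C (dg k n i) := by
    rw [mul_smul_comm, mul_one, smul_sub]
  have e2 : (Polynomial.C (xg k n i) * X - Polynomial.C (dg k n i))
        * (Polynomial.C (-cA k n) : Av k n)
      = -(Polynomial.C (xg k n i * cA k n) * X) + Polynomial.C (dg k n i * cA k n) := by
    rw [sub_mul, CX_mul_C, ← map_mul, mul_neg, map_neg, neg_mul, mul_neg, map_neg,
      sub_neg_eq_add]
  have e3 : (Polynomial.C (-(cA k n * xg k n i)) : Av k n) * ((2 : k) • (X : Av k n))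
      = -((2 : k) • (Polynomial.C (cA k n * xg k n i) * X)) := by
    rw [mul_smul_comm, map_neg, neg_mul, smul_neg]
  have e4 : (Polynomial.C (-(cA k n * xg k n i)) : Av k n) * (Polynomial.C (-cA k n) : Av k n)
      = Polynomial.C ((cA k n * xg k n i) * cA k n) := by
    rw [← map_mul, neg_mul_neg]
  rw [e1, e2, e3, e4, mul_zero, zero_sub, map_neg]
  congr 2
  abel

lemma identity_d (hn1 : 1 ≤ n) (i : Fin n) :
    -ψ2 k n {i} + Pr 1 (ψ2 k n {i}) (ψ2 k n ∅)
      + ∑ j ∈ Finset.univ.erase i, Pr 0 (bEl k n i j) (ψ2 k n {j})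
    = ((n : k) - 2) • (C (Polynomial.C (dg k n i)) : Wc k n) := by
  simp only [pr0_bEl_single k n hPr]
  rw [pr1_single_empty k n hPr, psi2_single, Finset.sum_add_distrib,
    Finset.sum_add_distrib, Finset.sum_neg_distrib, sumCX k n, sumC k n, sumCC_X k n,
    sum_Dx k n i, sum_Dd k n i, sum_Dcx k n i, xg_c k n i, cxc k n i]
  have hcast : ((n - 1 : ℕ) • dg k n i) = ((n : k) - 1) • dg k n i := by
    rw [← Nat.cast_smul_eq_nsmul k (n - 1), Nat.cast_sub hn1, Nat.cast_one]
  rw [hcast]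
  simp only [map_sub, map_add, map_neg, sub_mul, add_mul, neg_mul, map_smul,
    smul_mul_assoc, map_zero, ← Polynomial.smul_C]
  module

end Identities

section DirA

variable (k : Type) [Field k] [CharZero k] (n : ℕ)
variable {Pr : ℕ → Wc k n →ₗ[k] Wc k n →ₗ[k] Wc k n} (hPr : IsWProd k n Pr)

lemma vxiW (i : Fin n) : vW k n * xiW k n i = C (Polynomial.C (xg k n i) * X) := by
  rw [vW, xiW, ← map_mul, Polynomial.X_mul]

lemma embD_Dm (a : An k n) : embD k n a = Dm k n (embA k n a) := by
  rw [embD_eq, Dm_apply, embA, Polynomial.X_mul]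

lemma mem_C2_vW : vW k n ∈ C2sub k n Pr :=
  mem_confCl_of_mem Pr (Or.inl (Or.inl rfl))

lemma mem_C2_vxiW (i : Fin n) : vW k n * xiW k n i ∈ C2sub k n Pr :=
  mem_confCl_of_mem Pr (Or.inl (Or.inr ⟨i, rfl⟩))

lemma mem_C2_paW (i : Fin n) : paW k n i ∈ C2sub k n Pr :=
  mem_confCl_of_mem Pr (Or.inr ⟨i, rfl⟩)

include hPr

lemma mem_C2_vxl (l : List (Fin n)) :
    (C (Polynomial.C ((l.map (xg k n)).prod) * X) : Wc k n) ∈ C2sub k n Pr := by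
  induction l with
  | nil =>
    simpa [vW] using mem_C2_vW k n (Pr := Pr)
  | cons j l ih =>
    have key : Pr 1 (vW k n * xiW k n j)
        (C (Polynomial.C ((l.map (xg k n)).prod) * X))
        = C (Polynomial.C (((j :: l).map (xg k n)).prod) * X) := by
      rw [vxiW, pr1_CC k n hPr, Polynomial.derivative_C_mul_X, CX_mul_C,
        List.map_cons, List.prod_cons]
    rw [← key]
    exact confCl_P Pr 1 (mem_C2_vxiW k n j) ih

lemma mem_C2_dxl (i : Fin n) (l : List (Fin n)) :
    (C (Polynomial.C (dg k n i * (l.map (xg k n)).prod)) : Wc k n) ∈ C2sub k n Pr := by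
  have key : Pr 1 (paW k n i) (C (Polynomial.C ((l.map (xg k n)).prod) * X))
      = C (Polynomial.C (dg k n i * (l.map (xg k n)).prod)) := by
    rw [paW, pr1_CC k n hPr, Polynomial.derivative_C_mul_X, ← map_mul]
  rw [← key]
  exact confCl_P Pr 1 (mem_C2_paW k n i) (mem_C2_vxl k n hPr l)

lemma mem_C2_psi2 (I : Finset (Fin n)) : ψ2 k n I ∈ C2sub k n Pr := by
  rw [ψ2]
  apply Submodule.sub_mem
  · apply Submodule.smul_mem
    have h : vW k n * embA k n (xiI k n I)
        = C (Polynomial.C (((I.sort (· ≤ ·)).map (xg k n)).prod) * X) := by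
      rw [vW_embA, xiI]
    rw [h]
    exact mem_C2_vxl k n hPr _
  · apply Submodule.sum_mem
    intro i _
    apply Submodule.add_mem
    · rw [embD_Dm]
      apply confCl_D
      have h : embA k n (dg k n i * xg k n i * xiI k n I)
          = C (Polynomial.C (dg k n i * (((i :: I.sort (· ≤ ·)).map (xg k n)).prod))) := by
        rw [embA, List.map_cons, List.prod_cons, ← mul_assoc, xiI]
      rw [h]
      exact mem_C2_dxl k n hPr i _
    · by_cases hm : i ∈ I
      · rw [dxi, if_pos hm, mul_smul_comm]
        have h : embA k n (((-1 : k) ^ (I.filter (fun j => j < i)).card)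
              • (dg k n i * xiI k n (I.erase i)))
            = ((-1 : k) ^ (I.filter (fun j => j < i)).card)
              • C (Polynomial.C (dg k n i * (((I.erase i).sort (· ≤ ·)).map (xg k n)).prod)) := by
          rw [embA, xiI, Polynomial.smul_C, Polynomial.smul_C]
        rw [h]
        exact Submodule.smul_mem _ _ (mem_C2_dxl k n hPr i _)
      · rw [dxi, if_neg hm, mul_zero, embA, map_zero, map_zero]
        exact Submodule.zero_mem _

end DirA

end S14
/-- for `n ≥ 1`, `n ≠ 2`, the conformal subalgebra of `W` generated by
`{ψ₂(g_I) : I ⊆ {1,…,n}}` equals `C₂`, i.e. `(C₂, ψ₂)` is an associative envelope of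
the conformal superalgebra `Kₙ`. -/
theorem stmt_14 (k : Type) [Field k] [CharZero k] (n : ℕ) (hn : 1 ≤ n) (hn2 : n ≠ 2)
    (Pr : ℕ → Wc k n →ₗ[k] Wc k n →ₗ[k] Wc k n) (hPr : IsWProd k n Pr) :
    confCl k n Pr (Set.range (fun I : Finset (Fin n) => ψ2 k n I)) = C2sub k n Pr := by
  classical
  have hν : ((n : k) - 2) ≠ 0 := by
    rw [sub_ne_zero]
    intro h
    exact hn2 (by exact_mod_cast h)
  set S := Set.range (fun I : Finset (Fin n) => ψ2 k n I) with hS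
  have hmemS : ∀ I : Finset (Fin n), ψ2 k n I ∈ confCl k n Pr S :=
    fun I => S14.mem_confCl_of_mem Pr ⟨I, rfl⟩
  have hbEl : ∀ i j : Fin n, i ≠ j → S14.bEl k n i j ∈ confCl k n Pr S := by
    intro i j hij
    rw [← S14.smul_psi2_pair k n hij]
    exact Submodule.smul_mem _ _ (hmemS _)
  apply le_antisymm
  · apply S14.confCl_le Pr
    · rintro x ⟨I, rfl⟩
      exact S14.mem_C2_psi2 k n hPr I
    · intro x hx
      exact S14.confCl_D Pr hx
    · intro m x hx y hy
      exact S14.confCl_P Pr m hx hy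
  · apply S14.confCl_le Pr
    · rintro x ((rfl | ⟨i, rfl⟩) | ⟨i, rfl⟩)
      · -- vW
        have hc : ψ2 k n ∅ - Pr 1 (ψ2 k n ∅) (ψ2 k n ∅)
            - ∑ j : Fin n, Pr 0 (ψ2 k n {j}) (ψ2 k n {j}) ∈ confCl k n Pr S := by
          refine Submodule.sub_mem _ (Submodule.sub_mem _ (hmemS ∅) ?_) ?_
          · exact S14.confCl_P Pr 1 (hmemS ∅) (hmemS ∅)
          · exact Submodule.sum_mem _ fun j _ => S14.confCl_P Pr 0 (hmemS {j}) (hmemS {j})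
        rw [S14.identity_v k n hPr] at hc
        have h2 := Submodule.smul_mem _ ((n : k) - 2)⁻¹ hc
        rwa [smul_smul, inv_mul_cancel₀ hν, one_smul] at h2
      · -- vW * xiW i
        have hc : ψ2 k n {i} - Pr 1 (ψ2 k n ∅) (ψ2 k n {i})
            + ∑ j ∈ Finset.univ.erase i, Pr 0 (ψ2 k n {j}) (S14.bEl k n i j)
            ∈ confCl k n Pr S := by
          refine Submodule.add_mem _ (Submodule.sub_mem _ (hmemS {i}) ?_) ?_
          · exact S14.confCl_P Pr 1 (hmemS ∅) (hmemS {i})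
          · refine Submodule.sum_mem _ fun j hj => ?_
            exact S14.confCl_P Pr 0 (hmemS {j})
              (hbEl i j (Finset.ne_of_mem_erase hj).symm)
        rw [S14.identity_xi k n hPr hn i] at hc
        have h2 := Submodule.smul_mem _ ((n : k) - 2)⁻¹ hc
        rw [smul_smul, inv_mul_cancel₀ hν, one_smul] at h2
        show vW k n * xiW k n i ∈ confCl k n Pr S
        rwa [S14.vxiW]
      · -- paW i
        have hc : -ψ2 k n {i} + Pr 1 (ψ2 k n {i}) (ψ2 k n ∅)
            + ∑ j ∈ Finset.univ.erase i, Pr 0 (S14.bEl k n i j) (ψ2 k n {j})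
            ∈ confCl k n Pr S := by
          refine Submodule.add_mem _ (Submodule.add_mem _ (Submodule.neg_mem _ (hmemS {i})) ?_) ?_
          · exact S14.confCl_P Pr 1 (hmemS {i}) (hmemS ∅)
          · refine Submodule.sum_mem _ fun j hj => ?_
            exact S14.confCl_P Pr 0
              (hbEl i j (Finset.ne_of_mem_erase hj).symm) (hmemS {j})
        rw [S14.identity_d k n hPr hn i] at hc
        have h2 := Submodule.smul_mem _ ((n : k) - 2)⁻¹ hc
        rwa [smul_smul, inv_mul_cancel₀ hν, one_smul] at h2
    · intro x hx
      exact S14.confCl_D Pr hx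
    · intro m x hx y hy
      exact S14.confCl_P Pr m hx hy
end

section
/- For every n ≥ 1 and every subset I ⊆ {1,…,n}, the identity ψ₂(g_I) = ψ₁(g_I) − (n−2)·(D ⊗ ξ_I) holds in W = k[D] ⊗ Aₙ[v]. In particular, when n = 2, ψ₁(g_I) = ψ₂(g_I) for all I. -/
set_option maxSynthPendingDepth 5

namespace Stmt15Aux

variable (k : Type) [Field k] (n : ℕ)

lemma xg_anti (i j : Fin n) : xg k n i * xg k n j = -(xg k n j * xg k n i) := by
  have h := RingQuot.mkAlgHom_rel k (ARel.xixi (k := k) i j)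
  simp only [map_add, map_mul, map_zero] at h
  rw [eq_neg_iff_add_eq_zero]
  exact h

lemma dg_xg (i j : Fin n) :
    dg k n i * xg k n j = (if i = j then 1 else 0) - xg k n j * dg k n i := by
  have h := RingQuot.mkAlgHom_rel k (ARel.paxi (k := k) i j)
  rw [apply_ite (RingQuot.mkAlgHom k (ARel k n)), map_one, map_zero,
    map_add, map_mul, map_mul] at h
  rw [eq_sub_iff_add_eq]
  exact h

/-- product of `ξ`'s along a list -/
noncomputable def pX (L : List (Fin n)) : An k n := (L.map (xg k n)).prod

lemma pX_nil : pX k n [] = 1 := rfl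

lemma pX_cons (j : Fin n) (L : List (Fin n)) :
    pX k n (j :: L) = xg k n j * pX k n L := by simp [pX]

lemma pX_append (L₁ L₂ : List (Fin n)) :
    pX k n (L₁ ++ L₂) = pX k n L₁ * pX k n L₂ := by simp [pX]

/-- the "derivative" term produced when commuting `∂ᵢ` through a list of `ξ`'s -/
noncomputable def Dl (i : Fin n) : List (Fin n) → An k n
  | [] => 0
  | j :: L => (if i = j then pX k n L else 0) - xg k n j * Dl i L

lemma dg_pX (i : Fin n) : ∀ L : List (Fin n),
    dg k n i * pX k n L
      = ((-1 : k) ^ L.length) • (pX k n L * dg k n i) + Dl k n i L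
  | [] => by simp [pX_nil, Dl]
  | j :: L => by
    have ih := dg_pX i L
    rw [pX_cons, ← mul_assoc, dg_xg, sub_mul, mul_assoc, ih, mul_add, mul_smul_comm,
      ite_mul, one_mul, zero_mul]
    show _ = _ + ((if i = j then pX k n L else 0) - xg k n j * Dl k n i L)
    rw [List.length_cons, pow_succ, mul_neg_one, neg_smul, mul_assoc]
    abel

lemma Dl_of_not_mem (i : Fin n) : ∀ L : List (Fin n), i ∉ L → Dl k n i L = 0
  | [], _ => rfl
  | j :: L, h => by
    have h1 : i ≠ j := fun e => h (e ▸ List.mem_cons_self (a := j) (l := L))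
    have h2 : i ∉ L := fun e => h (List.mem_cons_of_mem _ e)
    show (if i = j then pX k n L else 0) - xg k n j * Dl k n i L = 0
    rw [if_neg h1, Dl_of_not_mem i L h2, mul_zero, sub_zero]

lemma Dl_split (i : Fin n) : ∀ L₁ L₂ : List (Fin n), i ∉ L₁ → i ∉ L₂ →
    Dl k n i (L₁ ++ i :: L₂) = ((-1 : k) ^ L₁.length) • pX k n (L₁ ++ L₂)
  | [], L₂, _, h₂ => by
    show (if i = i then pX k n L₂ else 0) - xg k n i * Dl k n i L₂ = _
    rw [if_pos rfl, Dl_of_not_mem k n i L₂ h₂, mul_zero, sub_zero]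
    simp
  | j :: L₁, L₂, h₁, h₂ => by
    have hij : i ≠ j := fun e => h₁ (e ▸ List.mem_cons_self (a := j) (l := L₁))
    have h₁' : i ∉ L₁ := fun e => h₁ (List.mem_cons_of_mem _ e)
    show (if i = j then _ else 0) - xg k n j * Dl k n i (L₁ ++ i :: L₂) = _
    rw [if_neg hij, Dl_split i L₁ L₂ h₁' h₂, List.cons_append, pX_cons,
      List.length_cons, pow_succ, mul_neg_one, neg_smul, mul_smul_comm, zero_sub]

lemma xg_move (i : Fin n) : ∀ L₁ L₂ : List (Fin n),
    xg k n i * pX k n (L₁ ++ L₂)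
      = ((-1 : k) ^ L₁.length) • pX k n (L₁ ++ i :: L₂)
  | [], L₂ => by simp [pX_cons]
  | j :: L₁, L₂ => by
    rw [List.cons_append, pX_cons, ← mul_assoc, xg_anti, neg_mul, mul_assoc,
      xg_move i L₁ L₂, List.cons_append, pX_cons, List.length_cons, pow_succ,
      mul_neg_one, neg_smul, mul_smul_comm]

end Stmt15Aux

namespace Stmt15Aux

variable (k : Type) [Field k] (n : ℕ)

lemma sort_split (I : Finset (Fin n)) (i : Fin n) (hi : i ∈ I) :
    I.sort (· ≤ ·)
      = (I.filter (· < i)).sort (· ≤ ·) ++ i :: (I.filter (fun j => i < j)).sort (· ≤ ·) := by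
  set L₁ := (I.filter (· < i)).sort (· ≤ ·) with hL₁
  set L₂ := (I.filter (fun j => i < j)).sort (· ≤ ·) with hL₂
  have m₁ : ∀ a ∈ L₁, a ∈ I ∧ a < i := by
    intro a ha; simpa [hL₁, Finset.mem_sort, Finset.mem_filter] using ha
  have m₂ : ∀ a ∈ L₂, a ∈ I ∧ i < a := by
    intro a ha; simpa [hL₂, Finset.mem_sort, Finset.mem_filter] using ha
  have hsR : List.Pairwise (· ≤ ·) (L₁ ++ i :: L₂) := by
    refine List.pairwise_append.mpr ⟨Finset.pairwise_sort _ _, ?_, ?_⟩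
    · exact List.pairwise_cons.mpr
        ⟨fun b hb => le_of_lt (m₂ b hb).2, Finset.pairwise_sort _ _⟩
    · intro a ha b hb
      rcases List.mem_cons.mp hb with rfl | hb
      · exact le_of_lt (m₁ a ha).2
      · exact le_of_lt (lt_trans (m₁ a ha).2 (m₂ b hb).2)
  have hnd : (L₁ ++ i :: L₂).Nodup := by
    refine List.Nodup.append (Finset.sort_nodup _ _) ?_ ?_
    · refine List.nodup_cons.mpr ⟨fun h => ?_, Finset.sort_nodup _ _⟩
      exact absurd (m₂ i h).2 (lt_irrefl i)
    · intro a ha hb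
      rcases List.mem_cons.mp hb with rfl | hb
      · exact absurd (m₁ a ha).2 (lt_irrefl a)
      · exact absurd (lt_trans (m₁ a ha).2 (m₂ a hb).2) (lt_irrefl a)
  refine List.Perm.eq_of_pairwise' (Finset.pairwise_sort _ _) hsR ?_
  refine List.perm_of_nodup_nodup_toFinset_eq (Finset.sort_nodup _ _) hnd ?_
  ext a
  rw [hL₁, hL₂]
  simp only [List.toFinset_append, List.toFinset_cons, Finset.mem_union,
    Finset.mem_insert, List.mem_toFinset, Finset.mem_sort, Finset.mem_filter,
    Finset.sort_toFinset]
  constructor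
  · intro ha
    rcases lt_trichotomy a i with h | h | h
    · exact Or.inl ⟨ha, h⟩
    · exact Or.inr (Or.inl h)
    · exact Or.inr (Or.inr ⟨ha, h⟩)
  · rintro (⟨ha, _⟩ | rfl | ⟨ha, _⟩)
    · exact ha
    · exact hi
    · exact ha

lemma sort_erase_split (I : Finset (Fin n)) (i : Fin n) :
    (I.erase i).sort (· ≤ ·)
      = (I.filter (· < i)).sort (· ≤ ·) ++ (I.filter (fun j => i < j)).sort (· ≤ ·) := by
  set L₁ := (I.filter (· < i)).sort (· ≤ ·) with hL₁
  set L₂ := (I.filter (fun j => i < j)).sort (· ≤ ·) with hL₂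
  have m₁ : ∀ a ∈ L₁, a ∈ I ∧ a < i := by
    intro a ha; simpa [hL₁, Finset.mem_sort, Finset.mem_filter] using ha
  have m₂ : ∀ a ∈ L₂, a ∈ I ∧ i < a := by
    intro a ha; simpa [hL₂, Finset.mem_sort, Finset.mem_filter] using ha
  have hsR : List.Pairwise (· ≤ ·) (L₁ ++ L₂) := by
    refine List.pairwise_append.mpr ⟨Finset.pairwise_sort _ _, Finset.pairwise_sort _ _, ?_⟩
    intro a ha b hb
    exact le_of_lt (lt_trans (m₁ a ha).2 (m₂ b hb).2)
  have hnd : (L₁ ++ L₂).Nodup := by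
    refine List.Nodup.append (Finset.sort_nodup _ _) (Finset.sort_nodup _ _) ?_
    intro a ha hb
    exact absurd (lt_trans (m₁ a ha).2 (m₂ a hb).2) (lt_irrefl a)
  refine List.Perm.eq_of_pairwise' (Finset.pairwise_sort _ _) hsR ?_
  refine List.perm_of_nodup_nodup_toFinset_eq (Finset.sort_nodup _ _) hnd ?_
  ext a
  rw [hL₁, hL₂]
  simp only [List.toFinset_append, Finset.mem_union, List.mem_toFinset,
    Finset.mem_sort, Finset.mem_filter, Finset.sort_toFinset, Finset.mem_erase]
  constructor
  · rintro ⟨hne, ha⟩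
    rcases lt_trichotomy a i with h | h | h
    · exact Or.inl ⟨ha, h⟩
    · exact absurd h hne
    · exact Or.inr ⟨ha, h⟩
  · rintro (⟨ha, h⟩ | ⟨ha, h⟩)
    · exact ⟨ne_of_lt h, ha⟩
    · exact ⟨ne_of_gt h, ha⟩

end Stmt15Aux

namespace Stmt15Aux

set_option synthInstance.maxHeartbeats 1000000
set_option maxHeartbeats 1600000

variable (k : Type) [Field k] (n : ℕ)

lemma xiI_pX (I : Finset (Fin n)) : xiI k n I = pX k n (I.sort (· ≤ ·)) := rfl

lemma Dl_sort (i : Fin n) (I : Finset (Fin n)) :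
    Dl k n i (I.sort (· ≤ ·)) = dxi k n i I := by
  by_cases hi : i ∈ I
  · have h1 : i ∉ (I.filter (· < i)).sort (· ≤ ·) := by
      simp [Finset.mem_sort, Finset.mem_filter]
    have h2 : i ∉ (I.filter (fun j => i < j)).sort (· ≤ ·) := by
      simp [Finset.mem_sort, Finset.mem_filter]
    rw [sort_split n I i hi, Dl_split k n i _ _ h1 h2, dxi, if_pos hi]
    congr 1
    · rw [Finset.length_sort]
    · rw [xiI_pX, sort_erase_split n]
  · rw [dxi, if_neg hi, Dl_of_not_mem]
    simp [Finset.mem_sort, hi]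

lemma dg_xiI (i : Fin n) (I : Finset (Fin n)) :
    dg k n i * xiI k n I
      = ((-1 : k) ^ I.card) • (xiI k n I * dg k n i) + dxi k n i I := by
  have h := dg_pX k n i (I.sort (· ≤ ·))
  rw [Finset.length_sort, Dl_sort] at h
  exact h

lemma keyA (i : Fin n) (I : Finset (Fin n)) :
    dg k n i * xg k n i * xiI k n I
      = xiI k n I - ((-1 : k) ^ I.card) • (xg k n i * xiI k n I * dg k n i)
          - xg k n i * dxi k n i I := by
  have h := dg_xg k n i i
  rw [if_pos rfl] at h
  rw [h, sub_mul, one_mul, mul_assoc, dg_xiI, mul_add, mul_smul_comm]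
  simp only [mul_assoc]
  abel

lemma keyC (i : Fin n) (I : Finset (Fin n)) :
    dg k n i * dxi k n i I
      = -(((-1 : k) ^ I.card) • (dxi k n i I * dg k n i)) := by
  by_cases hi : i ∈ I
  · have hni : i ∉ I.erase i := Finset.notMem_erase i I
    have h2 : dxi k n i (I.erase i) = 0 := by rw [dxi, if_neg hni]
    have h1 := dg_xiI k n i (I.erase i)
    rw [h2, add_zero] at h1
    rw [dxi, if_pos hi, mul_smul_comm, h1, smul_mul_assoc, smul_smul, smul_smul,
      ← neg_smul]
    congr 1
    rw [← Finset.card_erase_add_one hi]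
    ring
  · rw [dxi, if_neg hi]
    simp

lemma keyB (i : Fin n) (I : Finset (Fin n)) (hi : i ∈ I) :
    xg k n i * dxi k n i I = xiI k n I := by
  have h1 : i ∉ (I.filter (· < i)).sort (· ≤ ·) := by
    simp [Finset.mem_sort, Finset.mem_filter]
  have hx := xg_move k n i ((I.filter (· < i)).sort (· ≤ ·))
    ((I.filter (fun j => i < j)).sort (· ≤ ·))
  rw [dxi, if_pos hi, mul_smul_comm, xiI_pX, sort_erase_split n, hx,
    ← sort_split n I i hi, smul_smul, Finset.length_sort, ← pow_add,
    Even.neg_one_pow ⟨(I.filter (· < i)).card, rfl⟩, one_smul, xiI_pX]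

lemma xg_dxi_not_mem (i : Fin n) (I : Finset (Fin n)) (hi : i ∉ I) :
    xg k n i * dxi k n i I = 0 := by rw [dxi, if_neg hi, mul_zero]

lemma sumB (I : Finset (Fin n)) :
    ∑ i : Fin n, xg k n i * dxi k n i I = I.card • xiI k n I := by
  have h : ∑ i : Fin n, xg k n i * dxi k n i I = ∑ i ∈ I, xg k n i * dxi k n i I :=
    (Finset.sum_subset (Finset.subset_univ I)
      (fun x _ hx => xg_dxi_not_mem k n x I hx)).symm
  rw [h, Finset.sum_congr rfl (fun i hi => keyB k n i I hi), Finset.sum_const]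

/-! embedding lemmas -/

lemma embA_mul (a b : An k n) : embA k n (a * b) = embA k n a * embA k n b := by
  simp [embA]

lemma embA_smul (c : k) (a : An k n) : embA k n (c • a) = c • embA k n a := by
  rw [embA, embA, ← Polynomial.smul_C, ← Polynomial.smul_C]

lemma embA_sub (a b : An k n) : embA k n (a - b) = embA k n a - embA k n b := by
  simp [embA]

lemma embA_neg (a : An k n) : embA k n (-a) = -embA k n a := by simp [embA]

lemma embD_eq (a : An k n) : embD k n a = embA k n a * Polynomial.X := by
  rw [embD, embA, ← Polynomial.C_mul_X_eq_monomial]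

lemma embD_sub (a b : An k n) :
    embD k n (a - b) = embD k n a - embD k n b := by
  rw [embD_eq, embD_eq, embD_eq, embA_sub, sub_mul]

lemma embD_smul (c : k) (a : An k n) : embD k n (c • a) = c • embD k n a := by
  rw [embD_eq, embD_eq, embA_smul, smul_mul_assoc]

lemma embD_nsmul (m : ℕ) (a : An k n) :
    embD k n (m • a) = (m : k) • embD k n a := by
  rw [← Nat.cast_smul_eq_nsmul k, embD_smul]

lemma embA_sum (f : Fin n → An k n) :
    embA k n (∑ i : Fin n, f i) = ∑ i : Fin n, embA k n (f i) := by
  simp only [embA, map_sum]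

lemma embD_sum (f : Fin n → An k n) :
    embD k n (∑ i : Fin n, f i) = ∑ i : Fin n, embD k n (f i) := by
  simp only [embD_eq, embA_sum, Finset.sum_mul]

lemma vmD_mul (a : An k n) :
    vmD k n * embA k n a = vW k n * embA k n a - embD k n a := by
  rw [vmD, sub_mul, (Polynomial.commute_X (embA k n a)).eq, ← embD_eq, vW]

lemma key_sum (I : Finset (Fin n)) :
    ∑ i : Fin n,
        (embD k n (dg k n i * xg k n i * xiI k n I) + embA k n (dg k n i * dxi k n i I))
      = ((n : k) - (I.card : k)) • embD k n (xiI k n I)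
        - ((-1 : k) ^ I.card) •
            ∑ i : Fin n,
              (embD k n (xg k n i * xiI k n I * dg k n i)
                + embA k n (dxi k n i I * dg k n i)) := by
  have step : ∀ i : Fin n,
      embD k n (dg k n i * xg k n i * xiI k n I) + embA k n (dg k n i * dxi k n i I)
        = (embD k n (xiI k n I)
            - ((-1 : k) ^ I.card) • embD k n (xg k n i * xiI k n I * dg k n i)
            - embD k n (xg k n i * dxi k n i I))
          - ((-1 : k) ^ I.card) • embA k n (dxi k n i I * dg k n i) := by
    intro i
    rw [keyA, keyC, embD_sub, embD_sub, embD_smul, embA_neg, embA_smul]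
    abel
  rw [Finset.sum_congr rfl (fun i _ => step i)]
  have hS : ∑ x : Fin n, embD k n (xg k n x * dxi k n x I)
      = ((I.card : k)) • embD k n (xiI k n I) := by
    rw [← embD_sum, sumB, embD_nsmul]
  rw [Finset.sum_sub_distrib, Finset.sum_sub_distrib, Finset.sum_sub_distrib,
    Finset.sum_const, hS, ← Finset.smul_sum, ← Finset.smul_sum,
    Finset.sum_add_distrib, Finset.card_univ, Fintype.card_fin,
    ← Nat.cast_smul_eq_nsmul k]
  module

end Stmt15Aux

/-- `ψ₂(g_I) = ψ₁(g_I) - (n-2)·(D ⊗ ξ_I)` for every `I ⊆ {1,…,n}`;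
in particular `ψ₁ = ψ₂` when `n = 2`. -/
theorem stmt_15 (k : Type) [Field k] [CharZero k] (n : ℕ) (hn : 1 ≤ n) :
    (∀ I : Finset (Fin n),
        ψ2 k n I = ψ1 k n I - ((n : k) - 2) • embD k n (xiI k n I)) ∧
    (n = 2 → ∀ I : Finset (Fin n), ψ1 k n I = ψ2 k n I) := by
  have main : ∀ I : Finset (Fin n),
      ψ2 k n I = ψ1 k n I - ((n : k) - 2) • embD k n (xiI k n I) := by
    intro I
    unfold ψ1 ψ2
    rw [Stmt15Aux.key_sum k n I, Stmt15Aux.vmD_mul k n]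
    module
  refine ⟨main, fun h2 I => ?_⟩
  have hz : ((n : k) - 2) = 0 := by rw [h2]; norm_num
  rw [main I, hz, zero_smul, sub_zero]
end
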